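/- Let n and k be positive integers with k ≤ n, let σ be a permutation of {1,…,n}, and let c ∈ ℝ≥0^n be a vector of box costs for a fixed scenario. Let x^σ ∈ {0,1}^{n×n} be the permutation matrix of σ (x^σ_{it} = 1 iff σ(t) = i), and define the value of the scenario-aware k-selection relaxation at x^σ as V = inf { Σ_{t=1}^n (1 − y_t) + Σ_{i,t} c_i z_{it} : y ∈ [0,1]^n, z ∈ ℝ^{n×n}, z ≥ 0, z_{it} ≤ x^σ_{it} for all i,t, and for every subset A ⊆ {1,…,n} and every t, Σ_{t' ≤ t} Σ_{i ∉ A} z_{it'} ≥ (k − |A|) y_t }. Then for every τ ∈ {1,…,n} and every set S ⊆ {σ(1),…,σ(τ)} with |S| = k, one has V ≤ τ + Σ_{i ∈ S} c_i. That is, the relaxation value at any permutation matrix is at most the cost of any scenario-aware partially-adaptive strategy that opens boxes in order σ, stops at time τ, and selects the k boxes S from among those opened. -/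

import Mathlib

/-- the value of the scenario-aware `k`-selection relaxation
(Relaxation-SPA-k), evaluated at the permutation matrix of `σ` (box `σ t` is
opened at time `t+1`, times being `1, …, n`), is at most the cost
`τ + ∑_{i ∈ S} c_i` of any scenario-aware partially-adaptive strategy that
opens boxes in order `σ`, stops at time `τ`, and selects `k` opened boxes `S`. -/
theorem k_selection_relaxation_le_strategy_cost
    (n k : ℕ) (hn : 0 < n) (hk : 0 < k) (hkn : k ≤ n)
    (σ : Equiv.Perm (Fin n)) (c : Fin n → ℝ) (hc : ∀ i, 0 ≤ c i)
    (V : ℝ)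
    (hV : V = sInf {v : ℝ | ∃ (y : Fin n → ℝ) (z : Fin n → Fin n → ℝ),
      (∀ t : Fin n, 0 ≤ y t ∧ y t ≤ 1) ∧
      (∀ (i t : Fin n), 0 ≤ z i t) ∧
      (∀ (i t : Fin n), z i t ≤ (if σ t = i then (1 : ℝ) else 0)) ∧
      (∀ (A : Finset (Fin n)) (t : Fin n),
        ((k : ℝ) - (A.card : ℝ)) * y t ≤ ∑ t' ∈ Finset.Iic t, ∑ i ∈ Aᶜ, z i t') ∧
      v = (∑ t : Fin n, (1 - y t)) + ∑ i : Fin n, ∑ t : Fin n, c i * z i t}) :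
    ∀ (τ : Fin n) (S : Finset (Fin n)),
      S ⊆ (Finset.Iic τ).image σ → S.card = k →
      V ≤ ((τ : ℝ) + 1) + ∑ i ∈ S, c i := by
  intro τ S hS hScard
  subst hV
  -- membership witness
  set y : Fin n → ℝ := fun t => if τ < t then 1 else 0 with hy
  set z : Fin n → Fin n → ℝ :=
    fun i t => if σ t = i ∧ i ∈ S ∧ t ≤ τ then 1 else 0 with hz
  have hinv : ∀ i ∈ S, σ.symm i ≤ τ := by
    intro i hi
    obtain ⟨t, ht, rfl⟩ := Finset.mem_image.mp (hS hi)
    simpa using Finset.mem_Iic.mp ht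
  apply csInf_le
  · refine ⟨0, ?_⟩
    rintro v ⟨y', z', hy', hz'0, -, -, rfl⟩
    have h1 : (0:ℝ) ≤ ∑ t : Fin n, (1 - y' t) :=
      Finset.sum_nonneg fun t _ => by linarith [(hy' t).2]
    have h2 : (0:ℝ) ≤ ∑ i : Fin n, ∑ t : Fin n, c i * z' i t :=
      Finset.sum_nonneg fun i _ => Finset.sum_nonneg fun t _ =>
        mul_nonneg (hc i) (hz'0 i t)
    linarith
  refine ⟨y, z, ?_, ?_, ?_, ?_, ?_⟩
  · intro t; simp only [hy]; split <;> norm_num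
  · intro i t; simp only [hz]; split <;> norm_num
  · intro i t; simp only [hz]
    by_cases h : σ t = i
    · simp [h]; split <;> norm_num
    · simp [h]
  · intro A t
    by_cases ht : τ < t
    · -- y t = 1
      have hyt : y t = 1 := by simp [hy, ht]
      rw [hyt, mul_one]
      set T : Finset (Fin n) := (Finset.Iic τ).filter (fun t' => σ t' ∈ S \ A) with hT
      have hTimage : T.image σ = S \ A := by
        ext i
        simp only [Finset.mem_image, hT, Finset.mem_filter]
        constructor
        · rintro ⟨t', ⟨-, h2⟩, rfl⟩; exact h2
        · intro hi
          exact ⟨σ.symm i, ⟨Finset.mem_Iic.mpr (hinv i (Finset.mem_sdiff.mp hi).1),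
            by simpa using hi⟩, by simp⟩
      have hTcard : T.card = (S \ A).card := by
        rw [← hTimage, Finset.card_image_of_injective _ σ.injective]
      have hk1 : (k:ℝ) - A.card ≤ (S \ A).card := by
        have h1 : (S \ A).card + (S ∩ A).card = S.card :=
          Finset.card_sdiff_add_card_inter S A
        have h2 : (S ∩ A).card ≤ A.card :=
          Finset.card_le_card Finset.inter_subset_right
        have h3 : k ≤ (S \ A).card + A.card := by omega
        have h4 : (k:ℝ) ≤ ((S \ A).card : ℝ) + A.card := by exact_mod_cast h3
        linarith
      have hTsub : T ⊆ Finset.Iic t := by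
        intro t' ht'
        have := (Finset.mem_filter.mp ht').1
        exact Finset.mem_Iic.mpr (le_trans (Finset.mem_Iic.mp this) ht.le)
      have hstep : ((S \ A).card : ℝ) ≤ ∑ t' ∈ Finset.Iic t, ∑ i ∈ Aᶜ, z i t' := by
        rw [← hTcard]
        have h3 : ∀ t' ∈ T, (1:ℝ) ≤ ∑ i ∈ Aᶜ, z i t' := by
          intro t' ht'
          have hmem := Finset.mem_filter.mp ht'
          have hσ : σ t' ∈ S \ A := hmem.2
          have hσA : σ t' ∈ Aᶜ :=
            Finset.mem_compl.mpr (Finset.mem_sdiff.mp hσ).2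
          have hzval : z (σ t') t' = 1 := by
            simp [hz, (Finset.mem_sdiff.mp hσ).1, Finset.mem_Iic.mp hmem.1]
          calc (1:ℝ) = z (σ t') t' := hzval.symm
            _ ≤ ∑ i ∈ Aᶜ, z i t' := Finset.single_le_sum (f := fun i => z i t')
                (fun i _ => by simp only [hz]; split <;> norm_num) hσA
        calc ((T.card : ℝ)) = ∑ t' ∈ T, (1:ℝ) := by simp
          _ ≤ ∑ t' ∈ T, ∑ i ∈ Aᶜ, z i t' := Finset.sum_le_sum h3
          _ ≤ ∑ t' ∈ Finset.Iic t, ∑ i ∈ Aᶜ, z i t' := by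
              apply Finset.sum_le_sum_of_subset_of_nonneg hTsub
              intro t' _ _
              exact Finset.sum_nonneg fun i _ => by
                simp only [hz]; split <;> norm_num
      linarith
    · have hyt : y t = 0 := by simp [hy, ht]
      rw [hyt, mul_zero]
      exact Finset.sum_nonneg fun t' _ => Finset.sum_nonneg fun i _ => by
        simp only [hz]; split <;> norm_num
  · -- value equality
    have h1 : (∑ t : Fin n, (1 - y t)) = (τ : ℝ) + 1 := by
      have : ∀ t : Fin n, (1 : ℝ) - y t = if t ≤ τ then 1 else 0 := by
        intro t; simp only [hy]
        by_cases h : τ < t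
        · simp [h, not_le.mpr h]
        · simp [h, not_lt.mp h]
      simp only [this]
      rw [← Finset.sum_filter, Finset.sum_const]
      have : (Finset.univ.filter (fun t : Fin n => t ≤ τ)) = Finset.Iic τ := by
        ext t; simp
      rw [this]
      simp [Nat.card_Iic]
    have h2 : (∑ i : Fin n, ∑ t : Fin n, c i * z i t) = ∑ i ∈ S, c i := by
      rw [Finset.sum_comm]
      have hinner : ∀ t : Fin n, (∑ i : Fin n, c i * z i t)
          = if σ t ∈ S ∧ t ≤ τ then c (σ t) else 0 := by
        intro t
        rw [Finset.sum_eq_single (σ t)]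
        · by_cases h : σ t ∈ S ∧ t ≤ τ
          · simp [hz, h]
          · simp [hz, h]
        · intro i _ hne
          simp [hz, (Ne.symm hne : σ t ≠ i)]
        · intro h; exact absurd (Finset.mem_univ _) h
      simp only [hinner]
      rw [← Equiv.sum_comp σ.symm (fun t => if σ t ∈ S ∧ t ≤ τ then c (σ t) else 0)]
      simp only [Equiv.apply_symm_apply]
      rw [← Finset.sum_filter]
      have : Finset.univ.filter (fun i : Fin n => i ∈ S ∧ σ.symm i ≤ τ) = S := by
        ext i
        simp only [Finset.mem_filter, Finset.mem_univ, true_and]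
        exact ⟨fun h => h.1, fun h => ⟨h, hinv i h⟩⟩
      rw [this]
    rw [h1, h2]
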